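/- Let Φ be an irreducible reduced root system with base Π and J ⊆ Π such that the relative root system Φ_J has rank ≥ 2. For any relative root α₀ ∈ Φ_J there exist positive relative roots α₁, …, α_n ∈ Φ_J⁺ such that: (1) each partial sum α₀ + α₁ + ⋯ + α_i is a relative root; (2) α₀ + α₁ + ⋯ + α_n equals the maximal relative root α̃; and (3) for each i, there are no positive integers m, k with m(α₀ + ⋯ + α_i) = −k·α_{i+1}. -/

import Mathlib

open scoped RealInnerProductSpace

/-- A reduced root system `Φ` with a fixed base (system of simple roots) `base`
in a real inner product space. -/
structure RootSystemData (V : Type) [NormedAddCommGroup V] [InnerProductSpace ℝ V] where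
  Φ : Set V
  base : Finset V
  finite : Φ.Finite
  zero_notMem : (0:V) ∉ Φ
  neg_mem : ∀ a ∈ Φ, -a ∈ Φ
  reduced : ∀ a ∈ Φ, ∀ t : ℝ, t • a ∈ Φ → t = 1 ∨ t = -1
  reflect_mem : ∀ a ∈ Φ, ∀ b ∈ Φ, b - (2 * (inner ℝ a b : ℝ) / (inner ℝ a a : ℝ)) • a ∈ Φ
  cartan_int : ∀ a ∈ Φ, ∀ b ∈ Φ, ∃ n : ℤ, 2 * (inner ℝ a b : ℝ) / (inner ℝ a a : ℝ) = (n : ℝ)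
  base_sub : ↑base ⊆ Φ
  base_indep : LinearIndependent ℝ (fun b : base => (b : V))
  base_gen : ∀ a ∈ Φ,
    (∃ c : V → ℕ, a = ∑ b ∈ base, c b • b) ∨ (∃ c : V → ℕ, -a = ∑ b ∈ base, c b • b)

namespace RootSystemData

variable {V : Type} [NormedAddCommGroup V] [InnerProductSpace ℝ V] (RS : RootSystemData V)

/-- `a` is a nonnegative integral combination of the simple roots. -/
def IsPos (a : V) : Prop := ∃ c : V → ℕ, a = ∑ b ∈ RS.base, c b • b

/-- The quotient space `V / ⟨Π ∖ J⟩`, ambient space of the relative roots. -/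
abbrev Qspace (J : Finset V) : Type :=
  V ⧸ Submodule.span ℝ ((RS.base : Set V) \ (J : Set V))

/-- The canonical projection `π : V → V / ⟨Π ∖ J⟩`. -/
def proj (J : Finset V) : V →ₗ[ℝ] RS.Qspace J :=
  Submodule.mkQ _

/-- The set of relative roots `Φ_J = π(Φ) ∖ {0}`. -/
def relRoots (J : Finset V) : Set (RS.Qspace J) := (RS.proj J '' RS.Φ) \ {0}

/-- `β` is a simple relative root: a nonzero image of a simple root in `J`. -/
def IsSimpleRel (J : Finset V) (β : RS.Qspace J) : Prop :=
  β ≠ 0 ∧ ∃ b ∈ J, β = RS.proj J b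

/-- `β` is a positive relative root: a relative root that is a nonnegative
integral combination of the simple relative roots. -/
def IsPosRel (J : Finset V) (β : RS.Qspace J) : Prop :=
  β ∈ RS.relRoots J ∧ ∃ c : V → ℕ, β = ∑ b ∈ J, c b • RS.proj J b

/-- `a` is maximal in `S` with respect to the base `Π`. -/
def IsMaximalIn (S : Set V) (a : V) : Prop := a ∈ S ∧ ∀ b ∈ RS.base, a + b ∉ S

/-- `a` is minimal in `S` with respect to the base `Π`. -/
def IsMinimalIn (S : Set V) (a : V) : Prop := a ∈ S ∧ ∀ b ∈ RS.base, a - b ∉ S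

/-- `a` is the highest root: every root is obtained from it by subtracting a
nonnegative combination of simple roots. -/
def IsHighest (a : V) : Prop :=
  a ∈ RS.Φ ∧ ∀ b ∈ RS.Φ, ∃ c : V → ℕ, a - b = ∑ x ∈ RS.base, c x • x

/-- `S` is an irreducible component of `Φ`: a nonempty subset orthogonal to its
complement admitting no further nontrivial orthogonal splitting. -/
def IsComponent (S : Set V) : Prop :=
  S ⊆ RS.Φ ∧ S.Nonempty ∧ (∀ a ∈ S, ∀ b ∈ RS.Φ \ S, (inner ℝ a b : ℝ) = 0) ∧
    ∀ T ⊆ S, T.Nonempty → (∀ a ∈ T, ∀ b ∈ RS.Φ \ T, (inner ℝ a b : ℝ) = 0) → T = S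

/-- The root system is irreducible. -/
def Irred : Prop := RS.IsComponent RS.Φ

open scoped Classical

variable {V : Type} [NormedAddCommGroup V] [InnerProductSpace ℝ V] {RS' : RootSystemData V}

variable {RS : RootSystemData V}


lemma root_ne_zero {a : V} (ha : a ∈ RS.Φ) : a ≠ 0 := fun h => RS.zero_notMem (h ▸ ha)

lemma inner_self_pos' {a : V} (ha : a ∈ RS.Φ) : 0 < (inner ℝ a a : ℝ) :=
  lt_of_le_of_ne real_inner_self_nonneg
    (fun h => root_ne_zero ha (inner_self_eq_zero.mp h.symm))

/-- Coefficient extraction: linear functionals dual to the base. -/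
lemma exists_coord {x : V} (hx : x ∈ RS.base) :
    ∃ φ : V →ₗ[ℝ] ℝ, ∀ y ∈ RS.base, φ y = if y = x then 1 else 0 := by
  classical
  have hli : LinearIndepOn ℝ id (RS.base : Set V) := by
    have := RS.base_indep
    exact this
  refine ⟨(Module.Basis.extend hli).coord ⟨x, hli.subset_extend _ hx⟩, ?_⟩
  intro y hy
  have hyx : (Module.Basis.extend hli) ⟨y, hli.subset_extend _ hy⟩ = y := Module.Basis.extend_apply_self hli _
  have := (Module.Basis.extend hli).repr_self_apply
    (⟨y, hli.subset_extend _ hy⟩ : hli.extend (Set.subset_univ _))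
    (⟨x, hli.subset_extend _ hx⟩ : hli.extend (Set.subset_univ _))
  rw [Module.Basis.coord_apply, ← hyx, this]
  simp [hyx, Subtype.ext_iff]

open Classical in
/-- A fixed choice of dual functionals for the base. -/
noncomputable def co (RS : RootSystemData V) (x : V) : V →ₗ[ℝ] ℝ :=
  if hx : x ∈ RS.base then (exists_coord hx).choose else 0

lemma co_apply {x : V} (hx : x ∈ RS.base) {y : V} (hy : y ∈ RS.base) :
    RS.co x y = if y = x then 1 else 0 := by
  rw [co, dif_pos hx]
  exact (exists_coord hx).choose_spec y hy

lemma co_sum {x : V} (hx : x ∈ RS.base) (c : V → ℝ) {s : Finset V} (hs : s ⊆ RS.base) :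
    RS.co x (∑ b ∈ s, c b • b) = if x ∈ s then c x else 0 := by
  classical
  rw [map_sum]
  have : ∀ b ∈ s, RS.co x (c b • b) = if b = x then c b else 0 := by
    intro b hb
    rw [map_smul, co_apply hx (hs hb)]
    by_cases h : b = x <;> simp [h]
  rw [Finset.sum_congr rfl this, Finset.sum_ite_eq' s x (fun b => c b)]

lemma natRep_real {a : V} {s : Finset V} {e : V → ℕ} (h : a = ∑ x ∈ s, e x • x) :
    a = ∑ x ∈ s, (e x : ℝ) • x := by
  rw [h]
  exact Finset.sum_congr rfl fun x _ => (Nat.cast_smul_eq_nsmul ℝ _ _).symm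

/-- key lemma: roots at obtuse angle sum to a root. -/
lemma F1 {a b : V} (ha : a ∈ RS.Φ) (hb : b ∈ RS.Φ) (hneg : (inner ℝ a b : ℝ) < 0)
    (hne : a + b ≠ 0) : a + b ∈ RS.Φ := by
  obtain ⟨n, hn⟩ := RS.cartan_int a ha b hb
  obtain ⟨m, hm⟩ := RS.cartan_int b hb a ha
  have hab : (inner ℝ b a : ℝ) = (inner ℝ a b : ℝ) := (real_inner_comm b a).symm
  have haa := inner_self_pos' ha
  have hbb := inner_self_pos' hb
  have hn0 : (n : ℝ) < 0 := by
    rw [← hn]; exact div_neg_of_neg_of_pos (by linarith) haa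
  have hm0 : (m : ℝ) < 0 := by
    rw [← hm, hab]; exact div_neg_of_neg_of_pos (by linarith) hbb
  by_cases hn1 : n = -1
  · have := RS.reflect_mem a ha b hb
    rw [hn, hn1] at this
    simpa [add_comm] using this
  · by_cases hm1 : m = -1
    · have := RS.reflect_mem b hb a ha
      rw [hm, hm1] at this
      simpa using this
    · exfalso
      have hnZ : n < 0 := by exact_mod_cast hn0
      have hmZ : m < 0 := by exact_mod_cast hm0
      have hn2 : (n : ℝ) ≤ -2 := by
        have : n ≤ -2 := by omega
        exact_mod_cast this
      have hm2 : (m : ℝ) ≤ -2 := by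
        have : m ≤ -2 := by omega
        exact_mod_cast this
      have h1 : 2 * (inner ℝ a b : ℝ) ≤ -2 * (inner ℝ a a : ℝ) := by
        have := (div_le_iff₀ haa).mp (hn.symm ▸ hn2 : 2 * (inner ℝ a b : ℝ) / (inner ℝ a a : ℝ) ≤ -2)
        linarith
      have h2 : 2 * (inner ℝ a b : ℝ) ≤ -2 * (inner ℝ b b : ℝ) := by
        have := (div_le_iff₀ hbb).mp (hm.symm ▸ hm2 : 2 * (inner ℝ b a : ℝ) / (inner ℝ b b : ℝ) ≤ -2)
        linarith
      have hz : (inner ℝ (a+b) (a+b) : ℝ) ≤ 0 := by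
        rw [real_inner_add_add_self]; linarith
      exact hne (real_inner_self_nonpos.mp hz)

lemma F1' {a b : V} (ha : a ∈ RS.Φ) (hb : b ∈ RS.Φ) (hpos : 0 < (inner ℝ a b : ℝ))
    (hne : a ≠ b) : a - b ∈ RS.Φ := by
  have hneg : (inner ℝ a (-b) : ℝ) < 0 := by rw [inner_neg_right]; linarith
  have h := F1 ha (RS.neg_mem b hb) hneg (by
    intro h; exact hne (by linear_combination (norm := abel) h))
  simpa [sub_eq_add_neg] using h

lemma obtuse {x y : V} (hx : x ∈ RS.base) (hy : y ∈ RS.base) (hne : x ≠ y) :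
    (inner ℝ x y : ℝ) ≤ 0 := by
  by_contra hpos
  push_neg at hpos
  have hw : x - y ∈ RS.Φ := F1' (RS.base_sub hx) (RS.base_sub hy) hpos hne
  rcases RS.base_gen _ hw with ⟨e, he⟩ | ⟨e, he⟩
  · have he' := natRep_real he
    have h1 : RS.co y (x - y) = (e y : ℝ) := by
      rw [he', co_sum hy _ (le_refl _), if_pos hy]
    rw [map_sub, co_apply hy hx, co_apply hy hy, if_neg hne, if_pos rfl] at h1
    have : (0:ℝ) ≤ e y := Nat.cast_nonneg _
    linarith
  · have he' := natRep_real he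
    have h1 : RS.co x (-(x - y)) = (e x : ℝ) := by
      rw [he', co_sum hx _ (le_refl _), if_pos hx]
    rw [map_neg, map_sub, co_apply hx hx, co_apply hx hy, if_pos rfl,
      if_neg (Ne.symm hne)] at h1
    have : (0:ℝ) ≤ e x := Nat.cast_nonneg _
    linarith

/-- Reflection step used in the no-mixed-roots lemma. -/
lemma step_reflect {xs b : V} (hxs : xs ∈ RS.base) (hb : b ∈ RS.Φ)
    (hab : b + xs ∈ RS.Φ) (e : V → ℕ) (hrep : b = ∑ x ∈ RS.base, (e x : ℝ) • x)
    (hex : e xs = 0) (horth : (inner ℝ b xs : ℝ) = 0) : False := by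
  have hbb := inner_self_pos' hb
  have hinner : (inner ℝ b (b + xs) : ℝ) = inner ℝ b b := by
    rw [inner_add_right, horth, add_zero]
  have h2 : 2 * (inner ℝ b (b + xs) : ℝ) / (inner ℝ b b : ℝ) = 2 := by
    rw [hinner]; field_simp
  have hw : b + xs - (2 * (inner ℝ b (b + xs) : ℝ) / (inner ℝ b b : ℝ)) • b ∈ RS.Φ :=
    RS.reflect_mem b hb (b + xs) hab
  rw [h2] at hw
  have hw2 : xs - b ∈ RS.Φ := by
    have : b + xs - (2:ℝ) • b = xs - b := by
      rw [two_smul]; abel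
    rwa [this] at hw
  rcases RS.base_gen _ hw2 with ⟨g, hg⟩ | ⟨g, hg⟩
  · -- xs - b = ∑ g, but b has a positive coefficient somewhere
    have hbne : ∃ y ∈ RS.base, e y ≠ 0 := by
      by_contra hall
      push_neg at hall
      apply root_ne_zero hb
      rw [hrep]
      exact Finset.sum_eq_zero fun x hx => by rw [hall x hx]; simp
    obtain ⟨y, hyb, hey⟩ := hbne
    have hyx : y ≠ xs := fun h => hey (h ▸ hex)
    have h1 : RS.co y (xs - b) = (g y : ℝ) := by
      rw [natRep_real hg, co_sum hyb _ (le_refl _), if_pos hyb]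
    rw [map_sub, co_apply hyb hxs, if_neg (fun h => hyx h.symm), hrep,
      co_sum hyb _ (le_refl _), if_pos hyb] at h1
    have h2 : (0:ℝ) ≤ g y := Nat.cast_nonneg _
    have h3 : (1:ℝ) ≤ e y := by exact_mod_cast Nat.one_le_iff_ne_zero.mpr hey
    linarith
  · have h1 : RS.co xs (-(xs - b)) = (g xs : ℝ) := by
      rw [natRep_real hg, co_sum hxs _ (le_refl _), if_pos hxs]
    rw [map_neg, map_sub, co_apply hxs hxs, if_pos rfl, hrep,
      co_sum hxs _ (le_refl _), if_pos hxs, hex] at h1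
    have h2 : (0:ℝ) ≤ g xs := Nat.cast_nonneg _
    simp at h1
    linarith

/-- No root mixes two orthogonal parts of the base. -/
lemma no_mixed (S T : Finset V) (hU : S ∪ T = RS.base) (hdisj : Disjoint S T)
    (hST : ∀ x ∈ S, ∀ y ∈ T, (inner ℝ x y : ℝ) = 0) :
    ∀ N : ℕ, ∀ a ∈ RS.Φ, ∀ c : V → ℕ, a = ∑ x ∈ RS.base, (c x : ℝ) • x →
      (∑ x ∈ RS.base, c x) ≤ N →
      (∀ x ∈ S, c x = 0) ∨ (∀ x ∈ T, c x = 0) := by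
  intro N
  induction N with
  | zero =>
    intro a _ c _ hsum
    left
    intro x hx
    have := Finset.sum_eq_zero_iff.mp (Nat.le_zero.mp hsum) x
      (by rw [← hU]; exact Finset.mem_union_left _ hx)
    exact this
  | succ N ih =>
    intro a ha c hrep hsum
    by_contra hcon
    push_neg at hcon
    obtain ⟨⟨xS, hxS, hcS⟩, ⟨xT, hxT, hcT⟩⟩ := hcon
    have hSb : ∀ x ∈ S, x ∈ RS.base := fun x hx => by
      rw [← hU]; exact Finset.mem_union_left _ hx
    have hTb : ∀ x ∈ T, x ∈ RS.base := fun x hx => by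
      rw [← hU]; exact Finset.mem_union_right _ hx
    -- find a simple root with positive coefficient and positive inner product with a
    have hexp : (inner ℝ a a : ℝ) = ∑ x ∈ RS.base, (c x : ℝ) * (inner ℝ x a : ℝ) := by
      nth_rewrite 1 [hrep]
      rw [sum_inner]
      exact Finset.sum_congr rfl fun x _ => real_inner_smul_left _ _ _
    have haa := inner_self_pos' ha
    have hex : ∃ x ∈ RS.base, 0 < (c x : ℝ) * (inner ℝ x a : ℝ) := by
      by_contra hall
      push_neg at hall
      have : (inner ℝ a a : ℝ) ≤ 0 := hexp ▸ Finset.sum_nonpos hall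
      linarith
    obtain ⟨xm, hxm, hxmpos⟩ := hex
    have hcxm : c xm ≠ 0 := by
      intro h; rw [h] at hxmpos; simp at hxmpos
    have hxa : 0 < (inner ℝ xm a : ℝ) := by
      rcases lt_trichotomy (0:ℝ) (inner ℝ xm a : ℝ) with h | h | h
      · exact h
      · rw [← h] at hxmpos; simp at hxmpos
      · exfalso
        have : (c xm : ℝ) * (inner ℝ xm a : ℝ) ≤ 0 :=
          mul_nonpos_of_nonneg_of_nonpos (Nat.cast_nonneg _) (le_of_lt h)
        linarith
    -- a convenient witness distinct from xm with nonzero coefficient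
    have hwit : ∃ y, y ∈ RS.base ∧ c y ≠ 0 ∧ y ≠ xm := by
      by_cases h : xS = xm
      · refine ⟨xT, hTb _ hxT, hcT, fun hh => ?_⟩
        exact (Finset.disjoint_left.mp hdisj hxS) (by rw [h, ← hh]; exact hxT)
      · exact ⟨xS, hSb _ hxS, hcS, h⟩
    obtain ⟨y0, hy0b, hcy0, hy0ne⟩ := hwit
    -- a is not the simple root xm
    have hane : a ≠ xm := by
      intro h
      have h1 : RS.co y0 a = (c y0 : ℝ) := by
        rw [hrep, co_sum hy0b _ (le_refl _), if_pos hy0b]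
      rw [h, co_apply hy0b hxm, if_neg (fun hh => hy0ne hh.symm)] at h1
      exact hcy0 (by exact_mod_cast h1.symm)
    have hbΦ : a - xm ∈ RS.Φ :=
      F1' ha (RS.base_sub hxm) (by rw [real_inner_comm]; exact hxa) hane
    rcases RS.base_gen _ hbΦ with ⟨g, hg⟩ | ⟨g, hg⟩
    · -- positive case: recurse or reflect
      have hgr : a - xm = ∑ x ∈ RS.base, (g x : ℝ) • x := natRep_real hg
      have hptn : ∀ y ∈ RS.base, c y = g y + (if y = xm then 1 else 0) := by
        intro y hyb
        have h1 : RS.co y (a - xm) = (g y : ℝ) := by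
          rw [hgr, co_sum hyb _ (le_refl _), if_pos hyb]
        rw [map_sub, co_apply hyb hxm, hrep, co_sum hyb _ (le_refl _), if_pos hyb] at h1
        by_cases h : y = xm
        · rw [if_pos h]
          rw [if_pos h.symm] at h1
          have : (c y : ℝ) = (g y : ℝ) + 1 := by linarith
          exact_mod_cast this
        · rw [if_neg h]
          rw [if_neg (fun hh => h hh.symm)] at h1
          have : (c y : ℝ) = (g y : ℝ) := by linarith
          have := (@Nat.cast_inj ℝ _ _ _ _).mp this
          omega
      have hsumeq : ∑ x ∈ RS.base, c x = (∑ x ∈ RS.base, g x) + 1 := by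
        rw [Finset.sum_congr rfl hptn, Finset.sum_add_distrib,
          Finset.sum_ite_eq' RS.base xm (fun _ => 1), if_pos hxm]
      have hsumg : (∑ x ∈ RS.base, g x) ≤ N := by omega
      by_cases hmixg : (∃ x ∈ S, g x ≠ 0) ∧ (∃ x ∈ T, g x ≠ 0)
      · rcases ih (a - xm) hbΦ g hgr hsumg with hL | hR
        · obtain ⟨x, hx, hgx⟩ := hmixg.1; exact hgx (hL x hx)
        · obtain ⟨x, hx, hgx⟩ := hmixg.2; exact hgx (hR x hx)
      · have hvan : (∀ x ∈ S, g x = 0) ∨ (∀ x ∈ T, g x = 0) := by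
          rcases not_and_or.mp hmixg with h | h
          · left; intro x hx; by_contra hne; exact h ⟨x, hx, hne⟩
          · right; intro x hx; by_contra hne; exact h ⟨x, hx, hne⟩
        have hba : a - xm + xm = a := by abel
        rcases hvan with hS0 | hT0
        · by_cases hxmT : xm ∈ T
          · -- then c vanishes at xS : contradiction
            have hxSne : xS ≠ xm := fun hh =>
              (Finset.disjoint_left.mp hdisj hxS) (hh ▸ hxmT)
            have := hptn xS (hSb _ hxS)
            rw [if_neg hxSne, hS0 xS hxS] at this
            exact hcS this
          · have hxmS : xm ∈ S := by
              have h0 := hxm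
              rw [← hU] at h0
              rcases Finset.mem_union.mp h0 with h | h
              · exact h
              · exact absurd h hxmT
            have hgxm : g xm = 0 := hS0 xm hxmS
            have horth : (inner ℝ (a - xm) xm : ℝ) = 0 := by
              rw [hgr, sum_inner]
              apply Finset.sum_eq_zero
              intro x hx
              rw [real_inner_smul_left]
              by_cases hxSm : x ∈ S
              · rw [hS0 x hxSm]; simp
              · have hxT : x ∈ T := by
                  rw [← hU] at hx
                  rcases Finset.mem_union.mp hx with h | h
                  · exact absurd h hxSm
                  · exact h
                rw [real_inner_comm, hST xm hxmS x hxT, mul_zero]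
            exact step_reflect hxm hbΦ (by rwa [hba]) g hgr hgxm horth
        · by_cases hxmS : xm ∈ S
          · have hxTne : xT ≠ xm := fun hh =>
              (Finset.disjoint_left.mp hdisj (hh ▸ hxmS)) hxT
            have := hptn xT (hTb _ hxT)
            rw [if_neg hxTne, hT0 xT hxT] at this
            exact hcT this
          · have hxmT : xm ∈ T := by
              have h0 := hxm
              rw [← hU] at h0
              rcases Finset.mem_union.mp h0 with h | h
              · exact absurd h hxmS
              · exact h
            have hgxm : g xm = 0 := hT0 xm hxmT
            have horth : (inner ℝ (a - xm) xm : ℝ) = 0 := by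
              rw [hgr, sum_inner]
              apply Finset.sum_eq_zero
              intro x hx
              rw [real_inner_smul_left]
              by_cases hxTm : x ∈ T
              · rw [hT0 x hxTm]; simp
              · have hxS : x ∈ S := by
                  rw [← hU] at hx
                  rcases Finset.mem_union.mp hx with h | h
                  · exact h
                  · exact absurd h hxTm
                rw [hST x hxS xm hxmT, mul_zero]
            exact step_reflect hxm hbΦ (by rwa [hba]) g hgr hgxm horth
    · -- negative case : xm - a is a nonnegative combination, impossible
      have hgr : -(a - xm) = ∑ x ∈ RS.base, (g x : ℝ) • x := natRep_real hg
      have h1 : RS.co y0 (-(a - xm)) = (g y0 : ℝ) := by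
        rw [hgr, co_sum hy0b _ (le_refl _), if_pos hy0b]
      rw [map_neg, map_sub, co_apply hy0b hxm, if_neg (fun hh => hy0ne hh.symm),
        hrep, co_sum hy0b _ (le_refl _), if_pos hy0b] at h1
      have h2 : (0:ℝ) ≤ g y0 := Nat.cast_nonneg _
      have h3 : (1:ℝ) ≤ c y0 := by exact_mod_cast Nat.one_le_iff_ne_zero.mpr hcy0
      rw [sub_zero] at h1
      linarith

lemma highest_rep {atil : V} (hatil : RS.IsHighest atil) (hne : RS.base.Nonempty) :
    ∃ d : V → ℕ, atil = ∑ x ∈ RS.base, d x • x := by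
  obtain ⟨s₀, hs₀⟩ := hne
  obtain ⟨c, hc⟩ := hatil.2 s₀ (RS.base_sub hs₀)
  refine ⟨fun x => c x + (if x = s₀ then 1 else 0), ?_⟩
  have h1 : ∑ x ∈ RS.base, (c x + if x = s₀ then 1 else 0) • x
      = ∑ x ∈ RS.base, c x • x + ∑ x ∈ RS.base, (if x = s₀ then (1:ℕ) else 0) • x := by
    rw [← Finset.sum_add_distrib]
    exact Finset.sum_congr rfl fun x _ => (add_smul _ _ _)
  have h2 : ∑ x ∈ RS.base, (if x = s₀ then (1:ℕ) else 0) • x = s₀ := by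
    have : ∀ x ∈ RS.base, (if x = s₀ then (1:ℕ) else 0) • x = if x = s₀ then x else 0 := by
      intro x _
      by_cases h : x = s₀ <;> simp [h]
    rw [Finset.sum_congr rfl this, Finset.sum_ite_eq' RS.base s₀ (fun x => x), if_pos hs₀]
  rw [h1, h2, ← hc]
  abel

lemma highest_dom {atil : V} (hatil : RS.IsHighest atil) :
    ∀ x ∈ RS.base, 0 ≤ (inner ℝ atil x : ℝ) := by
  intro x hx
  by_contra hlt
  push_neg at hlt
  have hxΦ := RS.base_sub hx
  have hne0 : atil + x ≠ 0 := by
    intro h0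
    have hax : atil = -x := by linear_combination (norm := abel) h0
    obtain ⟨c, hc⟩ := hatil.2 x hxΦ
    have h1 : RS.co x (atil - x) = (c x : ℝ) := by
      rw [natRep_real hc, co_sum hx _ (le_refl _), if_pos hx]
    rw [map_sub, hax, map_neg, co_apply hx hx, if_pos rfl] at h1
    have : (0:ℝ) ≤ c x := Nat.cast_nonneg _
    linarith
  have hsum : atil + x ∈ RS.Φ := F1 hatil.1 hxΦ hlt hne0
  obtain ⟨c, hc⟩ := hatil.2 _ hsum
  have hc' : -x = ∑ z ∈ RS.base, (c z : ℝ) • z := by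
    rw [← natRep_real hc]; abel
  have h1 : RS.co x (-x) = (c x : ℝ) := by
    rw [hc', co_sum hx _ (le_refl _), if_pos hx]
  rw [map_neg, co_apply hx hx, if_pos rfl] at h1
  have : (0:ℝ) ≤ c x := Nat.cast_nonneg _
  linarith

lemma highest_full (hirr : RS.Irred) {atil : V} (hatil : RS.IsHighest atil)
    {d : V → ℕ} (hd : atil = ∑ x ∈ RS.base, (d x : ℝ) • x) :
    ∀ x ∈ RS.base, d x ≠ 0 := by
  classical
  set S := RS.base.filter (fun x => d x = 0) with hSdef
  set T := RS.base.filter (fun x => ¬ d x = 0) with hTdef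
  have hU : S ∪ T = RS.base := Finset.filter_union_filter_not_eq _ _
  have hdisj : Disjoint S T := Finset.disjoint_filter_filter_not _ _ _
  have hSb : ∀ x ∈ S, x ∈ RS.base := fun x hx => (Finset.mem_filter.mp hx).1
  have hTb : ∀ x ∈ T, x ∈ RS.base := fun x hx => (Finset.mem_filter.mp hx).1
  have hST : ∀ x ∈ S, ∀ y ∈ T, (inner ℝ x y : ℝ) = 0 := by
    intro x hxS y hyT
    have hx := hSb x hxS
    have hdx : d x = 0 := (Finset.mem_filter.mp hxS).2
    have hdom := highest_dom hatil x hx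
    have hexp : (inner ℝ atil x : ℝ) = ∑ z ∈ RS.base, (d z : ℝ) * (inner ℝ z x : ℝ) := by
      rw [hd, sum_inner]
      exact Finset.sum_congr rfl fun z _ => real_inner_smul_left _ _ _
    have hterms : ∀ z ∈ RS.base, (d z : ℝ) * (inner ℝ z x : ℝ) ≤ 0 := by
      intro z hz
      by_cases h : z = x
      · rw [h, hdx]; simp
      · exact mul_nonpos_of_nonneg_of_nonpos (Nat.cast_nonneg _) (obtuse hz hx h)
    have hzero : ∑ z ∈ RS.base, (d z : ℝ) * (inner ℝ z x : ℝ) = 0 :=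
      le_antisymm (Finset.sum_nonpos hterms) (by rw [← hexp]; exact hdom)
    have hy := (Finset.sum_eq_zero_iff_of_nonpos hterms).mp hzero y (hTb y hyT)
    have hdy : d y ≠ 0 := (Finset.mem_filter.mp hyT).2
    have : (inner ℝ y x : ℝ) = 0 := by
      have hpos : (0:ℝ) < d y := by exact_mod_cast Nat.pos_of_ne_zero hdy
      rcases mul_eq_zero.mp hy with h | h
      · exact absurd h (ne_of_gt hpos)
      · exact h
    rw [real_inner_comm]; exact this
  -- the set of roots supported away from S
  set 𝒯 : Set V := {a | a ∈ RS.Φ ∧ ∃ e : V → ℕ,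
    (a = ∑ x ∈ RS.base, (e x : ℝ) • x ∨ -a = ∑ x ∈ RS.base, (e x : ℝ) • x) ∧
    ∀ x ∈ S, e x = 0} with h𝒯def
  have h𝒯sub : 𝒯 ⊆ RS.Φ := fun a ha => ha.1
  have h𝒯ne : atil ∈ 𝒯 :=
    ⟨hatil.1, d, Or.inl hd, fun x hx => (Finset.mem_filter.mp hx).2⟩
  have horth : ∀ a ∈ 𝒯, ∀ b ∈ RS.Φ \ 𝒯, (inner ℝ a b : ℝ) = 0 := by
    rintro a ⟨haΦ, e, hesign, heS⟩ b ⟨hbΦ, hb𝒯⟩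
    obtain ⟨c, hcs⟩ : ∃ c : V → ℕ,
        (b = ∑ x ∈ RS.base, (c x : ℝ) • x ∨ -b = ∑ x ∈ RS.base, (c x : ℝ) • x) := by
      rcases RS.base_gen b hbΦ with ⟨c, hc⟩ | ⟨c, hc⟩
      · exact ⟨c, Or.inl (natRep_real hc)⟩
      · exact ⟨c, Or.inr (natRep_real hc)⟩
    have hvan : (∀ x ∈ S, c x = 0) ∨ (∀ x ∈ T, c x = 0) := by
      rcases hcs with hc | hc
      · exact no_mixed S T hU hdisj hST _ b hbΦ c hc (le_refl _)
      · exact no_mixed S T hU hdisj hST _ (-b) (RS.neg_mem b hbΦ) c hc (le_refl _)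
    rcases hvan with hvS | hvT
    · exact absurd ⟨hbΦ, c, hcs, hvS⟩ hb𝒯
    · -- supports are orthogonal
      have hEC : (inner ℝ (∑ x ∈ RS.base, (e x : ℝ) • x)
          (∑ y ∈ RS.base, (c y : ℝ) • y) : ℝ) = 0 := by
        rw [sum_inner]
        apply Finset.sum_eq_zero
        intro x hx
        rw [real_inner_smul_left, inner_sum]
        by_cases hxS : x ∈ S
        · rw [heS x hxS]; simp
        · have hxT : x ∈ T := by
            rw [← hU] at hx
            rcases Finset.mem_union.mp hx with h | h
            · exact absurd h hxS
            · exact h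
          have : ∀ y ∈ RS.base, (inner ℝ x ((c y : ℝ) • y) : ℝ) = 0 := by
            intro y hy
            rw [real_inner_smul_right]
            by_cases hyT : y ∈ T
            · rw [hvT y hyT]; simp
            · have hyS : y ∈ S := by
                rw [← hU] at hy
                rcases Finset.mem_union.mp hy with h | h
                · exact h
                · exact absurd h hyT
              rw [real_inner_comm, hST y hyS x hxT, mul_zero]
          rw [Finset.sum_congr rfl this, Finset.sum_const, smul_zero, mul_zero]
      have hae : a = (∑ x ∈ RS.base, (e x : ℝ) • x) ∨
          a = -(∑ x ∈ RS.base, (e x : ℝ) • x) := by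
        rcases hesign with h | h
        · exact Or.inl h
        · exact Or.inr (by rw [← h]; abel)
      have hbe : b = (∑ x ∈ RS.base, (c x : ℝ) • x) ∨
          b = -(∑ x ∈ RS.base, (c x : ℝ) • x) := by
        rcases hcs with h | h
        · exact Or.inl h
        · exact Or.inr (by rw [← h]; abel)
      rcases hae with h1 | h1 <;> rcases hbe with h2 | h2 <;>
        rw [h1, h2] <;> simp [inner_neg_left, inner_neg_right, hEC]
  have h𝒯eq : 𝒯 = RS.Φ := hirr.2.2.2 𝒯 h𝒯sub ⟨atil, h𝒯ne⟩ horth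
  intro x hx hdx
  have hxS : x ∈ S := Finset.mem_filter.mpr ⟨hx, hdx⟩
  have hxΦ : x ∈ RS.Φ := RS.base_sub hx
  have hx𝒯 : x ∈ 𝒯 := by rw [h𝒯eq]; exact hxΦ
  obtain ⟨-, e, hesign, heS⟩ := hx𝒯
  have hex : e x = 0 := heS x hxS
  rcases hesign with h | h
  · have h1 : RS.co x (∑ z ∈ RS.base, (e z : ℝ) • z) = (e x : ℝ) := by
      rw [co_sum hx _ (le_refl _), if_pos hx]
    rw [← h, co_apply hx hx, if_pos rfl, hex] at h1
    simp at h1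
  · have h1 : RS.co x (∑ z ∈ RS.base, (e z : ℝ) • z) = (e x : ℝ) := by
      rw [co_sum hx _ (le_refl _), if_pos hx]
    rw [← h, map_neg, co_apply hx hx, if_pos rfl, hex] at h1
    simp at h1


/-! ### Relative root infrastructure -/

section Rel

variable (J : Finset V)

noncomputable instance fdSpanBaseDiff {RS : RootSystemData V} {J : Finset V} :
    FiniteDimensional ℝ (Submodule.span ℝ ((RS.base : Set V) \ (J : Set V))) :=
  FiniteDimensional.span_of_finite ℝ ((RS.base.finite_toSet).subset Set.diff_subset)

/-- The map `Q̄ : V/U → V` induced by `id - orthogonal projection onto U`. -/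
noncomputable def Qbar (RS : RootSystemData V) (J : Finset V) : RS.Qspace J →ₗ[ℝ] V := by
  haveI : FiniteDimensional ℝ (Submodule.span ℝ ((RS.base : Set V) \ (J : Set V))) :=
    FiniteDimensional.span_of_finite ℝ ((RS.base.finite_toSet).subset Set.diff_subset)
  exact Submodule.liftQ _
    (LinearMap.id - (Submodule.span ℝ ((RS.base : Set V) \ (J : Set V))).subtype ∘ₗ
      (Submodule.orthogonalProjectionOnto (Submodule.span ℝ ((RS.base : Set V) \ (J : Set V)))).toLinearMap)
    (by
      intro u hu
      simp only [LinearMap.mem_ker, LinearMap.sub_apply, LinearMap.id_apply,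
        LinearMap.comp_apply, ContinuousLinearMap.coe_coe, Submodule.coe_subtype]
      rw [Submodule.coe_orthogonalProjectionOnto_apply, Submodule.starProjection_eq_self_iff.mpr hu, sub_self])

lemma Qbar_mk (v : V) :
    RS.Qbar J (Submodule.Quotient.mk v) = v -
      ((Submodule.orthogonalProjectionOnto (Submodule.span ℝ ((RS.base : Set V) \ (J : Set V)))) v : V) := by
  haveI : FiniteDimensional ℝ (Submodule.span ℝ ((RS.base : Set V) \ (J : Set V))) :=
    FiniteDimensional.span_of_finite ℝ ((RS.base.finite_toSet).subset Set.diff_subset)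
  rw [Qbar, Submodule.liftQ_apply]
  simp only [LinearMap.sub_apply, LinearMap.id_apply, LinearMap.comp_apply,
    ContinuousLinearMap.coe_coe, Submodule.coe_subtype]

lemma Qbar_proj_sub_mem (v : V) :
    RS.Qbar J (RS.proj J v) - v ∈ Submodule.span ℝ ((RS.base : Set V) \ (J : Set V)) := by
  haveI : FiniteDimensional ℝ (Submodule.span ℝ ((RS.base : Set V) \ (J : Set V))) :=
    FiniteDimensional.span_of_finite ℝ ((RS.base.finite_toSet).subset Set.diff_subset)
  rw [show RS.proj J v = Submodule.Quotient.mk v from rfl, Qbar_mk]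
  have : v - ((Submodule.orthogonalProjectionOnto (Submodule.span ℝ ((RS.base : Set V) \ (J : Set V)))) v : V)
      - v = -((Submodule.orthogonalProjectionOnto (Submodule.span ℝ ((RS.base : Set V) \ (J : Set V)))) v : V) := by
    abel
  rw [this]
  exact Submodule.neg_mem _
    (SetLike.coe_mem ((Submodule.orthogonalProjectionOnto (Submodule.span ℝ ((RS.base : Set V) \ (J : Set V)))) v))

lemma Qbar_orth (ξ : RS.Qspace J) :
    ∀ u ∈ Submodule.span ℝ ((RS.base : Set V) \ (J : Set V)), (inner ℝ (RS.Qbar J ξ) u : ℝ) = 0 := by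
  haveI : FiniteDimensional ℝ (Submodule.span ℝ ((RS.base : Set V) \ (J : Set V))) :=
    FiniteDimensional.span_of_finite ℝ ((RS.base.finite_toSet).subset Set.diff_subset)
  intro u hu
  obtain ⟨v, rfl⟩ := Submodule.Quotient.mk_surjective _ ξ
  rw [Qbar_mk, real_inner_comm]
  exact (Submodule.mem_orthogonal _ _).mp (Submodule.sub_starProjection_mem_orthogonal (K := Submodule.span ℝ ((RS.base : Set V) \ (J : Set V))) v) u hu

/-- The induced inner product on the quotient. -/
noncomputable def Bf (RS : RootSystemData V) (J : Finset V) (ξ η : RS.Qspace J) : ℝ :=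
  (inner ℝ (RS.Qbar J ξ) (RS.Qbar J η) : ℝ)

lemma Bf_comm (ξ η : RS.Qspace J) : RS.Bf J ξ η = RS.Bf J η ξ := real_inner_comm _ _

lemma Bf_smul_left (r : ℝ) (ξ η : RS.Qspace J) : RS.Bf J (r • ξ) η = r * RS.Bf J ξ η := by
  rw [Bf, Bf, map_smul, real_inner_smul_left]

lemma Bf_smul_right (r : ℝ) (ξ η : RS.Qspace J) : RS.Bf J ξ (r • η) = r * RS.Bf J ξ η := by
  rw [Bf, Bf, map_smul, real_inner_smul_right]

lemma Bf_neg_right (ξ η : RS.Qspace J) : RS.Bf J ξ (-η) = -RS.Bf J ξ η := by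
  rw [Bf, Bf, map_neg, inner_neg_right]

lemma Bf_sum_left {ι : Type} (s : Finset ι) (g : ι → RS.Qspace J) (η : RS.Qspace J) :
    RS.Bf J (∑ i ∈ s, g i) η = ∑ i ∈ s, RS.Bf J (g i) η := by
  rw [Bf, map_sum, sum_inner]
  rfl

lemma Bf_add_left (ξ ξ' η : RS.Qspace J) :
    RS.Bf J (ξ + ξ') η = RS.Bf J ξ η + RS.Bf J ξ' η := by
  rw [Bf, Bf, Bf, map_add, inner_add_left]

lemma Bf_self_pos {ξ : RS.Qspace J} (hξ : ξ ≠ 0) : 0 < RS.Bf J ξ ξ := by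
  have hQ : RS.Qbar J ξ ≠ 0 := by
    intro h0
    obtain ⟨v, rfl⟩ := Submodule.Quotient.mk_surjective _ ξ
    have hmem := Qbar_proj_sub_mem (RS := RS) J v
    rw [show RS.proj J v = Submodule.Quotient.mk v from rfl, h0, zero_sub] at hmem
    refine hξ ((Submodule.Quotient.mk_eq_zero _).mpr ?_)
    have h2 : -(-v) ∈ Submodule.span ℝ ((RS.base : Set V) \ (J : Set V)) := Submodule.neg_mem _ hmem
    simpa using h2
  rw [Bf, real_inner_self_eq_norm_mul_norm]
  have hn : 0 < ‖RS.Qbar J ξ‖ := norm_pos_iff.mpr hQ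
  exact mul_pos hn hn

lemma Bf_pair (ξ : RS.Qspace J) (b : V) :
    RS.Bf J ξ (RS.proj J b) = (inner ℝ (RS.Qbar J ξ) b : ℝ) := by
  have hmem := Qbar_proj_sub_mem (RS := RS) J b
  have h0 := Qbar_orth (RS := RS) J ξ _ hmem
  rw [inner_sub_right] at h0
  rw [Bf]
  linarith

/-- The fiber of a relative root. -/
noncomputable def fiber (RS : RootSystemData V) (J : Finset V) (ξ : RS.Qspace J) : Finset V :=
  RS.finite.toFinset.filter (fun a => RS.proj J a = ξ)

lemma mem_fiber {ξ : RS.Qspace J} {a : V} :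
    a ∈ RS.fiber J ξ ↔ a ∈ RS.Φ ∧ RS.proj J a = ξ := by
  rw [fiber, Finset.mem_filter, Set.Finite.mem_toFinset]

lemma proj_zero_of_mem {z : V} (hz : z ∈ RS.base) (hzJ : z ∉ J) : RS.proj J z = 0 := by
  rw [proj, Submodule.mkQ_apply]
  exact (Submodule.Quotient.mk_eq_zero _).mpr
    (Submodule.subset_span ⟨Finset.mem_coe.mpr hz, fun h => hzJ (Finset.mem_coe.mp h)⟩)

lemma fiber_orth (ξ : RS.Qspace J) {c : V} (hc : c ∈ RS.base) (hcJ : c ∉ J) :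
    (inner ℝ c (∑ a ∈ RS.fiber J ξ, a) : ℝ) = 0 := by
  have hcΦ : c ∈ RS.Φ := RS.base_sub hc
  have hcc := inner_self_pos' hcΦ
  have hπc : RS.proj J c = 0 := proj_zero_of_mem J hc hcJ
  set s : V → V := fun w => w - (2 * (inner ℝ c w : ℝ) / (inner ℝ c c : ℝ)) • c with hs
  have hsmem : ∀ a ∈ RS.fiber J ξ, s a ∈ RS.fiber J ξ := by
    intro a ha
    rw [mem_fiber] at ha ⊢
    refine ⟨RS.reflect_mem c hcΦ a ha.1, ?_⟩
    rw [hs]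
    simp only [map_sub, map_smul, hπc, smul_zero, sub_zero, ha.2]
  have hinv : ∀ a : V, s (s a) = a := by
    intro a
    have h1 : (inner ℝ c (s a) : ℝ) = -(inner ℝ c a : ℝ) := by
      rw [hs]
      simp only
      rw [inner_sub_right, real_inner_smul_right]
      field_simp
      ring
    rw [hs]
    simp only
    rw [h1]
    have h2 : 2 * -(inner ℝ c a : ℝ) / (inner ℝ c c : ℝ)
        = -(2 * (inner ℝ c a : ℝ) / (inner ℝ c c : ℝ)) := by ring
    rw [h2, neg_smul, sub_neg_eq_add]
    abel
  have hsum : ∑ a ∈ RS.fiber J ξ, s a = ∑ a ∈ RS.fiber J ξ, a :=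
    Finset.sum_nbij' s s hsmem hsmem (fun a _ => hinv a) (fun a _ => hinv a)
      (fun a _ => rfl)
  have hexp : ∑ a ∈ RS.fiber J ξ, s a
      = (∑ a ∈ RS.fiber J ξ, a) - (∑ a ∈ RS.fiber J ξ, 2 * (inner ℝ c a : ℝ) / (inner ℝ c c : ℝ)) • c := by
    rw [Finset.sum_smul]
    rw [← Finset.sum_sub_distrib]
  have hcoef : (∑ a ∈ RS.fiber J ξ, 2 * (inner ℝ c a : ℝ) / (inner ℝ c c : ℝ)) • c = 0 := by
    have := hsum
    rw [hexp] at this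
    have h4 : (∑ a ∈ RS.fiber J ξ, a) - (∑ a ∈ RS.fiber J ξ, 2 * (inner ℝ c a : ℝ) / (inner ℝ c c : ℝ)) • c
        - (∑ a ∈ RS.fiber J ξ, a) = 0 := by rw [this]; abel
    calc (∑ a ∈ RS.fiber J ξ, 2 * (inner ℝ c a : ℝ) / (inner ℝ c c : ℝ)) • c
        = -((∑ a ∈ RS.fiber J ξ, a) - (∑ a ∈ RS.fiber J ξ, 2 * (inner ℝ c a : ℝ) / (inner ℝ c c : ℝ)) • c
          - (∑ a ∈ RS.fiber J ξ, a)) := by abel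
      _ = 0 := by rw [h4, neg_zero]
  have hc0 : (∑ a ∈ RS.fiber J ξ, 2 * (inner ℝ c a : ℝ) / (inner ℝ c c : ℝ)) = 0 := by
    rcases smul_eq_zero.mp hcoef with h | h
    · exact h
    · exact absurd h (root_ne_zero hcΦ)
  have : 2 * (inner ℝ c (∑ a ∈ RS.fiber J ξ, a) : ℝ) / (inner ℝ c c : ℝ) = 0 := by
    rw [inner_sum, Finset.mul_sum, Finset.sum_div]
    exact hc0
  have h5 : 2 * (inner ℝ c (∑ a ∈ RS.fiber J ξ, a) : ℝ) = 0 := by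
    rcases div_eq_zero_iff.mp this with h | h
    · exact h
    · exact absurd h (ne_of_gt hcc)
  linarith

lemma fiber_sum_orthU (ξ : RS.Qspace J) :
    ∀ u ∈ Submodule.span ℝ ((RS.base : Set V) \ (J : Set V)),
      (inner ℝ (∑ a ∈ RS.fiber J ξ, a) u : ℝ) = 0 := by
  intro u hu
  induction hu using Submodule.span_induction with
  | mem x hx =>
    obtain ⟨hxb, hxJ⟩ := hx
    rw [real_inner_comm]
    exact fiber_orth J ξ (Finset.mem_coe.mp hxb) (fun h => hxJ (Finset.mem_coe.mpr h))
  | zero => exact inner_zero_right _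
  | add x y hx hy ihx ihy => rw [inner_add_right, ihx, ihy, add_zero]
  | smul r x hx ih => rw [real_inner_smul_right, ih, mul_zero]

lemma card_smul_Qbar (ξ : RS.Qspace J) :
    ((RS.fiber J ξ).card : ℝ) • RS.Qbar J ξ = ∑ a ∈ RS.fiber J ξ, a := by
  set v := ∑ a ∈ RS.fiber J ξ, a with hv
  have hπv : RS.proj J v = (RS.fiber J ξ).card • ξ := by
    rw [hv, map_sum]
    have : ∀ a ∈ RS.fiber J ξ, RS.proj J a = ξ := fun a ha => (mem_fiber J).mp ha |>.2
    rw [Finset.sum_congr rfl this, Finset.sum_const]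
  set w := RS.Qbar J (RS.proj J v) with hw
  have hwv : w - v ∈ Submodule.span ℝ ((RS.base : Set V) \ (J : Set V)) :=
    Qbar_proj_sub_mem J v
  have hworth : ∀ u ∈ Submodule.span ℝ ((RS.base : Set V) \ (J : Set V)),
      (inner ℝ w u : ℝ) = 0 := fun u hu => Qbar_orth J (RS.proj J v) u hu
  have hvorth := fiber_sum_orthU J ξ
  have hzero : (inner ℝ (w - v) (w - v) : ℝ) = 0 := by
    rw [inner_sub_left, hworth _ hwv, hvorth _ hwv, sub_zero]
  have hwveq : w = v := by
    have := (inner_self_eq_zero (𝕜 := ℝ)).mp hzero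
    have h2 : w - v = 0 := this
    linear_combination (norm := abel) h2
  have : w = ((RS.fiber J ξ).card : ℝ) • RS.Qbar J ξ := by
    rw [hw, hπv]
    have : ((RS.fiber J ξ).card : ℝ) • RS.Qbar J ξ = (RS.fiber J ξ).card • RS.Qbar J ξ :=
      Nat.cast_smul_eq_nsmul ℝ _ _
    rw [this, map_nsmul]
  rw [← this, hwveq]

/-- Key relative lemma: relative roots at obtuse angle add to a relative root. -/
lemma RF1 {ξ η : RS.Qspace J} (hξ : ξ ∈ RS.relRoots J) (hη : η ∈ RS.relRoots J)
    (hB : RS.Bf J ξ η < 0) (hne : ξ + η ≠ 0) : ξ + η ∈ RS.relRoots J := by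
  obtain ⟨⟨b, hbΦ, hbπ⟩, -⟩ := hη
  obtain ⟨⟨a₀, ha₀Φ, ha₀π⟩, -⟩ := hξ
  have hfne : a₀ ∈ RS.fiber J ξ := (mem_fiber J).mpr ⟨ha₀Φ, ha₀π⟩
  have hcard : 0 < (RS.fiber J ξ).card := Finset.card_pos.mpr ⟨a₀, hfne⟩
  have hkey : ∑ a ∈ RS.fiber J ξ, (inner ℝ a b : ℝ)
      = ((RS.fiber J ξ).card : ℝ) * RS.Bf J ξ η := by
    have h1 : RS.Bf J ξ η = (inner ℝ (RS.Qbar J ξ) b : ℝ) := by rw [← hbπ, Bf_pair]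
    calc ∑ a ∈ RS.fiber J ξ, (inner ℝ a b : ℝ) = (inner ℝ (∑ a ∈ RS.fiber J ξ, a) b : ℝ) :=
          (sum_inner _ _ _).symm
      _ = (inner ℝ (((RS.fiber J ξ).card : ℝ) • RS.Qbar J ξ) b : ℝ) := by
          rw [card_smul_Qbar]
      _ = ((RS.fiber J ξ).card : ℝ) * (inner ℝ (RS.Qbar J ξ) b : ℝ) := real_inner_smul_left _ _ _
      _ = ((RS.fiber J ξ).card : ℝ) * RS.Bf J ξ η := by rw [h1]
  have hneg : ∑ a ∈ RS.fiber J ξ, (inner ℝ a b : ℝ) < 0 := by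
    rw [hkey]
    exact mul_neg_of_pos_of_neg (by exact_mod_cast hcard) hB
  have hex : ∃ a ∈ RS.fiber J ξ, (inner ℝ a b : ℝ) < 0 := by
    by_contra hall
    push_neg at hall
    exact absurd (Finset.sum_nonneg hall) (not_le.mpr hneg)
  obtain ⟨a, haf, hab⟩ := hex
  obtain ⟨haΦ, haπ⟩ := (mem_fiber J).mp haf
  have hane : a + b ≠ 0 := by
    intro h0
    apply hne
    rw [← haπ, ← hbπ, ← map_add, h0, map_zero]
  have hsum := F1 haΦ hbΦ hab hane
  exact ⟨⟨a + b, hsum, by rw [map_add, haπ, hbπ]⟩, by simpa using hne⟩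

lemma relRoots_neg {η : RS.Qspace J} (hη : η ∈ RS.relRoots J) : -η ∈ RS.relRoots J := by
  obtain ⟨⟨b, hbΦ, hbπ⟩, hne⟩ := hη
  refine ⟨⟨-b, RS.neg_mem b hbΦ, by rw [map_neg, hbπ]⟩, ?_⟩
  simp only [Set.mem_singleton_iff] at hne ⊢
  intro h
  exact hne (by rw [← neg_neg η, h, neg_zero])

lemma RF1' {ξ η : RS.Qspace J} (hξ : ξ ∈ RS.relRoots J) (hη : η ∈ RS.relRoots J)
    (hB : 0 < RS.Bf J ξ η) (hne : ξ ≠ η) : ξ - η ∈ RS.relRoots J := by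
  have h1 : RS.Bf J ξ (-η) < 0 := by rw [Bf_neg_right]; linarith
  have h2 : ξ + -η ≠ 0 := fun h => hne (by linear_combination (norm := abel) h)
  have := RF1 J hξ (relRoots_neg J hη) h1 h2
  rwa [← sub_eq_add_neg] at this

lemma bcuR (h : V → ℝ) (hsum : ∑ x ∈ RS.base, h x • x = 0) : ∀ x ∈ RS.base, h x = 0 := by
  intro x hx
  have h1 := co_sum hx h (le_refl _)
  rw [hsum, map_zero, if_pos hx] at h1
  exact h1.symm

/-- Relative coefficient uniqueness. -/
lemma rcu (hJ : J ⊆ RS.base) (r : V → ℝ)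
    (hsum : ∑ y ∈ J, r y • RS.proj J y = 0) : ∀ y ∈ J, r y = 0 := by
  classical
  have hw : RS.proj J (∑ y ∈ J, r y • y) = 0 := by
    rw [map_sum]
    simp only [map_smul]
    exact hsum
  have hwU : (∑ y ∈ J, r y • y) ∈ Submodule.span ℝ ((RS.base : Set V) \ (J : Set V)) := by
    rw [proj, Submodule.mkQ_apply] at hw
    exact (Submodule.Quotient.mk_eq_zero _).mp hw
  rw [← Finset.coe_sdiff] at hwU
  obtain ⟨g, -, hg⟩ := Submodule.mem_span_finset.mp hwU
  set h : V → ℝ := fun x => if x ∈ J then r x else -(g x) with hh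
  have hsum0 : ∑ x ∈ RS.base, h x • x = 0 := by
    rw [← Finset.sum_sdiff hJ]
    have h1 : ∑ x ∈ RS.base \ J, h x • x = -(∑ y ∈ J, r y • y) := by
      have : ∀ x ∈ RS.base \ J, h x • x = -(g x • x) := by
        intro x hx
        rw [hh]
        simp only
        rw [if_neg (Finset.mem_sdiff.mp hx).2, neg_smul]
      rw [Finset.sum_congr rfl this, Finset.sum_neg_distrib, hg]
    have h2 : ∑ x ∈ J, h x • x = ∑ y ∈ J, r y • y := by
      apply Finset.sum_congr rfl
      intro y hy
      rw [hh]
      simp only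
      rw [if_pos hy]
    rw [h1, h2]
    abel
  intro y hy
  have := bcuR h hsum0 y (hJ hy)
  rw [hh] at this
  simp only at this
  rwa [if_pos hy] at this

lemma nat_qsum (c : V → ℕ) (s : Finset V) :
    ∑ y ∈ s, c y • RS.proj J y = ∑ y ∈ s, (c y : ℝ) • RS.proj J y :=
  Finset.sum_congr rfl fun y _ => (Nat.cast_smul_eq_nsmul ℝ _ _).symm

lemma proj_base_sum (hJ : J ⊆ RS.base) (c : V → ℝ) :
    RS.proj J (∑ x ∈ RS.base, c x • x) = ∑ y ∈ J, c y • RS.proj J y := by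
  rw [map_sum]
  simp only [map_smul]
  rw [← Finset.sum_sdiff hJ]
  have h1 : ∑ x ∈ RS.base \ J, c x • RS.proj J x = 0 := by
    apply Finset.sum_eq_zero
    intro x hx
    obtain ⟨hxb, hxJ⟩ := Finset.mem_sdiff.mp hx
    rw [proj_zero_of_mem J hxb hxJ, smul_zero]
  rw [h1, zero_add]

lemma delta_qsum (t : ℝ) {y : V} (hy : y ∈ J) :
    ∑ b ∈ J, (if b = y then t else 0) • RS.proj J b = t • RS.proj J y := by
  have : ∀ b ∈ J, (if b = y then t else 0) • RS.proj J b
      = if b = y then t • RS.proj J b else 0 := by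
    intro b _
    by_cases h : b = y <;> simp [h]
  rw [Finset.sum_congr rfl this, Finset.sum_ite_eq' J y (fun b => t • RS.proj J b), if_pos hy]

lemma qsum_add (A B : V → ℝ) : ∑ b ∈ J, (A b + B b) • RS.proj J b
    = (∑ b ∈ J, A b • RS.proj J b) + ∑ b ∈ J, B b • RS.proj J b := by
  rw [← Finset.sum_add_distrib]
  exact Finset.sum_congr rfl fun b _ => add_smul _ _ _

lemma qsum_smul (t : ℝ) (A : V → ℝ) : ∑ b ∈ J, (t * A b) • RS.proj J b
    = t • ∑ b ∈ J, A b • RS.proj J b := by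
  rw [Finset.smul_sum]
  exact Finset.sum_congr rfl fun b _ => (smul_smul t (A b) _).symm

lemma proj_simple_ne (hJ : J ⊆ RS.base) {y : V} (hy : y ∈ J) : RS.proj J y ≠ 0 := by
  intro h0
  have := rcu J hJ (fun b => if b = y then 1 else 0)
    (by rw [delta_qsum J 1 hy, one_smul]; exact h0) y hy
  simp at this

lemma simple_mem_rel (hJ : J ⊆ RS.base) {y : V} (hy : y ∈ J) :
    RS.proj J y ∈ RS.relRoots J :=
  ⟨⟨y, RS.base_sub (hJ hy), rfl⟩, by simpa using proj_simple_ne J hJ hy⟩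

lemma simple_posRel (hJ : J ⊆ RS.base) {y : V} (hy : y ∈ J) :
    RS.IsPosRel J (RS.proj J y) := by
  refine ⟨simple_mem_rel J hJ hy, fun b => if b = y then 1 else 0, ?_⟩
  rw [nat_qsum]
  have : ∀ b ∈ J, ((if b = y then (1:ℕ) else 0 : ℕ) : ℝ) • RS.proj J b
      = (if b = y then (1:ℝ) else 0) • RS.proj J b := by
    intro b _
    by_cases h : b = y <;> simp [h]
  rw [Finset.sum_congr rfl this, delta_qsum J 1 hy, one_smul]

/-- Any relative root is, up to sign, a nonnegative combination of the simple
relative roots. -/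
lemma rel_rep (hJ : J ⊆ RS.base) {σ : RS.Qspace J} (hσ : σ ∈ RS.relRoots J) :
    ∃ n : V → ℕ, σ = ∑ y ∈ J, (n y : ℝ) • RS.proj J y ∨
      -σ = ∑ y ∈ J, (n y : ℝ) • RS.proj J y := by
  obtain ⟨⟨a, haΦ, haπ⟩, -⟩ := hσ
  rcases RS.base_gen a haΦ with ⟨c, hc⟩ | ⟨c, hc⟩
  · refine ⟨c, Or.inl ?_⟩
    rw [← haπ, natRep_real hc, proj_base_sum J hJ]
  · refine ⟨c, Or.inr ?_⟩
    rw [← haπ, ← map_neg, natRep_real hc, proj_base_sum J hJ]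

/-- A positive relative root has a real nonnegative representation. -/
lemma posRel_rep {f : RS.Qspace J} (hf : RS.IsPosRel J f) :
    ∃ e : V → ℕ, f = ∑ y ∈ J, (e y : ℝ) • RS.proj J y := by
  obtain ⟨-, e, he⟩ := hf
  exact ⟨e, by rw [he, nat_qsum]⟩

/-- The highest relative root: representation with full support. -/
lemma theta_rep (hirr : RS.Irred) (hJ : J ⊆ RS.base) (hrank : 2 ≤ J.card)
    {atil : V} (hatil : RS.IsHighest atil) :
    ∃ dJ : V → ℕ, RS.proj J atil = ∑ y ∈ J, (dJ y : ℝ) • RS.proj J y ∧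
      ∀ y ∈ J, dJ y ≠ 0 := by
  have hJne : J.Nonempty := Finset.card_pos.mp (by omega)
  obtain ⟨y, hy⟩ := hJne
  obtain ⟨d, hd⟩ := highest_rep hatil ⟨y, hJ hy⟩
  have hd' := natRep_real hd
  have hfull := highest_full hirr hatil hd'
  exact ⟨d, by rw [hd', proj_base_sum J hJ], fun z hz => hfull z (hJ hz)⟩

lemma theta_mem (hJ : J ⊆ RS.base) {atil : V} (hatil : RS.IsHighest atil)
    {dJ : V → ℕ} (ht1 : RS.proj J atil = ∑ y ∈ J, (dJ y : ℝ) • RS.proj J y)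
    (ht2 : ∀ y ∈ J, dJ y ≠ 0) (hJne : J.Nonempty) :
    RS.proj J atil ∈ RS.relRoots J := by
  refine ⟨⟨atil, hatil.1, rfl⟩, ?_⟩
  simp only [Set.mem_singleton_iff]
  intro h0
  obtain ⟨y, hy⟩ := hJne
  have h2 : (dJ y : ℝ) = 0 := rcu J hJ (fun b => (dJ b : ℝ)) (by rw [← ht1]; exact h0) y hy
  exact ht2 y hy (by exact_mod_cast h2)

lemma theta_notline (hJ : J ⊆ RS.base) (hrank : 2 ≤ J.card) {atil : V}
    {dJ : V → ℕ} (ht1 : RS.proj J atil = ∑ y ∈ J, (dJ y : ℝ) • RS.proj J y)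
    (ht2 : ∀ y ∈ J, dJ y ≠ 0) :
    ∀ y ∈ J, ∀ t : ℝ, RS.proj J atil ≠ t • RS.proj J y := by
  intro y hy t heq
  obtain ⟨y', hy', hne'⟩ := Finset.exists_mem_ne (s := J) (by omega) y
  have h2 : ∑ b ∈ J, (-(if b = y then t else 0)) • RS.proj J b
      = -(t • RS.proj J y) := by
    calc ∑ b ∈ J, (-(if b = y then t else 0)) • RS.proj J b
        = ∑ b ∈ J, -((if b = y then t else 0) • RS.proj J b) :=
          Finset.sum_congr rfl fun b _ => neg_smul _ _
      _ = -∑ b ∈ J, (if b = y then t else 0) • RS.proj J b := Finset.sum_neg_distrib _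
      _ = -(t • RS.proj J y) := by rw [delta_qsum J t hy]
  have hsum0 : ∑ b ∈ J, ((dJ b : ℝ) + -(if b = y then t else 0)) • RS.proj J b = 0 := by
    rw [qsum_add, h2, ← ht1, heq]
    simp
  have h3 := rcu J hJ _ hsum0 y' hy'
  rw [if_neg hne'] at h3
  simp only [neg_zero, add_zero] at h3
  exact ht2 y' hy' (by exact_mod_cast h3)

/-- For every relative root `σ`, `θ̄ - σ` is a nonnegative combination. -/
lemma highest_rel (hJ : J ⊆ RS.base) {atil : V} (hatil : RS.IsHighest atil)
    {σ : RS.Qspace J} (hσ : σ ∈ RS.relRoots J) :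
    ∃ c : V → ℕ, RS.proj J atil - σ = ∑ y ∈ J, (c y : ℝ) • RS.proj J y := by
  obtain ⟨⟨a, haΦ, haπ⟩, -⟩ := hσ
  obtain ⟨c, hc⟩ := hatil.2 a haΦ
  refine ⟨c, ?_⟩
  rw [← haπ, ← map_sub, natRep_real hc, proj_base_sum J hJ]

lemma theta_posRel (hJ : J ⊆ RS.base) {atil : V} (hatil : RS.IsHighest atil)
    {dJ : V → ℕ} (ht1 : RS.proj J atil = ∑ y ∈ J, (dJ y : ℝ) • RS.proj J y)
    (ht2 : ∀ y ∈ J, dJ y ≠ 0) (hJne : J.Nonempty) :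
    RS.IsPosRel J (RS.proj J atil) :=
  ⟨theta_mem J hJ hatil ht1 ht2 hJne, dJ, by rw [nat_qsum]; exact ht1⟩

lemma theta_dom (hJ : J ⊆ RS.base) (hrank : 2 ≤ J.card) {atil : V}
    (hatil : RS.IsHighest atil)
    {dJ : V → ℕ} (ht1 : RS.proj J atil = ∑ y ∈ J, (dJ y : ℝ) • RS.proj J y)
    (ht2 : ∀ y ∈ J, dJ y ≠ 0) :
    ∀ y ∈ J, 0 ≤ RS.Bf J (RS.proj J atil) (RS.proj J y) := by
  intro y hy
  by_contra hlt
  push_neg at hlt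
  have hJne : J.Nonempty := Finset.card_pos.mp (by omega)
  have hθmem := theta_mem J hJ hatil ht1 ht2 hJne
  have hne0 : RS.proj J atil + RS.proj J y ≠ 0 := by
    intro h0
    have : RS.proj J atil = (-1 : ℝ) • RS.proj J y := by
      rw [neg_smul, one_smul]
      linear_combination (norm := abel) h0
    exact theta_notline J hJ hrank ht1 ht2 y hy (-1) this
  have hmem := RF1 J hθmem (simple_mem_rel J hJ hy) hlt hne0
  obtain ⟨⟨h, hhΦ, hhπ⟩, -⟩ := hmem
  obtain ⟨c, hc⟩ := hatil.2 h hhΦ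
  have hkey : -RS.proj J y = ∑ b ∈ J, (c b : ℝ) • RS.proj J b := by
    have h1 : RS.proj J (atil - h) = -RS.proj J y := by
      rw [map_sub, hhπ]
      abel
    rw [← h1, natRep_real hc, proj_base_sum J hJ]
  have hsum0 : ∑ b ∈ J, ((c b : ℝ) + (if b = y then 1 else 0)) • RS.proj J b = 0 := by
    rw [qsum_add, ← hkey, delta_qsum J 1 hy, one_smul]
    abel
  have h3 := rcu J hJ _ hsum0 y hy
  rw [if_pos rfl] at h3
  have : (0:ℝ) ≤ c y := Nat.cast_nonneg _
  linarith

lemma eq_inv_smul' {m : ℝ} (hm : m ≠ 0) {x y : RS.Qspace J} (h : m • x + y = 0) :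
    x = (-(m⁻¹)) • y := by
  have h1 : x = m⁻¹ • (m • x) := by rw [smul_smul, inv_mul_cancel₀ hm, one_smul]
  have h2 : m • x = -y := by linear_combination (norm := abel) h
  rw [h1, h2, smul_neg, neg_smul]

/-- No positive combination of two "positive" elements vanishes. -/
lemma prop_pos_pos (hJ : J ⊆ RS.base) {σ f : RS.Qspace J} {n e : V → ℝ}
    (hσrep : σ = ∑ y ∈ J, n y • RS.proj J y) (hn : ∀ y ∈ J, 0 ≤ n y)
    (hfrep : f = ∑ y ∈ J, e y • RS.proj J y) (he : ∀ y ∈ J, 0 ≤ e y)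
    (hσne : σ ≠ 0) :
    ∀ m k : ℝ, 0 < m → 0 < k → m • σ + k • f ≠ 0 := by
  intro m k hm hk h0
  have hsum0 : ∑ b ∈ J, (m * n b + k * e b) • RS.proj J b = 0 := by
    rw [qsum_add, qsum_smul, qsum_smul, ← hσrep, ← hfrep]
    exact h0
  apply hσne
  rw [hσrep]
  apply Finset.sum_eq_zero
  intro y hy
  have h3 := rcu J hJ _ hsum0 y hy
  have hny : n y = 0 := by nlinarith [hn y hy, he y hy]
  rw [hny, zero_smul]

/-- Main step: every relative root different from the highest one can be
raised by a positive relative root. -/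
lemma main_step (hirr : RS.Irred) (hJ : J ⊆ RS.base) (hrank : 2 ≤ J.card)
    {atil : V} (hatil : RS.IsHighest atil) {σ : RS.Qspace J} (hσ : σ ∈ RS.relRoots J)
    (hneθ : σ ≠ RS.proj J atil) :
    ∃ f : RS.Qspace J, RS.IsPosRel J f ∧ σ + f ∈ RS.relRoots J ∧
      ∀ m k : ℝ, 0 < m → 0 < k → m • σ + k • f ≠ 0 := by
  obtain ⟨dJ, ht1, ht2⟩ := theta_rep J hirr hJ hrank hatil
  have hJne : J.Nonempty := Finset.card_pos.mp (by omega)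
  have hθmem := theta_mem J hJ hatil ht1 ht2 hJne
  have hθposRel := theta_posRel J hJ hatil ht1 ht2 hJne
  have hθdom := theta_dom J hJ hrank hatil ht1 ht2
  have hθnl := theta_notline J hJ hrank ht1 ht2
  have hσne0 : σ ≠ 0 := by simpa using hσ.2
  have hθne0 : RS.proj J atil ≠ 0 := by simpa using hθmem.2
  obtain ⟨n, hrep⟩ := rel_rep J hJ hσ
  rcases hrep with hposrep | hnegrep
  · -- σ is a positive relative root
    by_cases hex : ∃ y ∈ J, RS.Bf J σ (RS.proj J y) < 0
    · obtain ⟨y, hy, hB⟩ := hex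
      refine ⟨RS.proj J y, simple_posRel J hJ hy, ?_, ?_⟩
      · refine RF1 J hσ (simple_mem_rel J hJ hy) hB ?_
        intro h0
        have hsum0 : ∑ b ∈ J, ((n b : ℝ) + (if b = y then 1 else 0)) • RS.proj J b = 0 := by
          rw [qsum_add, ← hposrep, delta_qsum J 1 hy, one_smul]
          exact h0
        have h3 := rcu J hJ _ hsum0 y hy
        rw [if_pos rfl] at h3
        have : (0:ℝ) ≤ n y := Nat.cast_nonneg _
        linarith
      · have hfrep : RS.proj J y = ∑ b ∈ J, (if b = y then (1:ℝ) else 0) • RS.proj J b := by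
          rw [delta_qsum J 1 hy, one_smul]
        exact prop_pos_pos J hJ hposrep (fun y _ => Nat.cast_nonneg _) hfrep
          (fun b _ => by by_cases h : b = y <;> simp [h]) hσne0
    · push_neg at hex
      obtain ⟨c, hc⟩ := highest_rel J hJ hatil hσ
      have hBpos : 0 < RS.Bf J (RS.proj J atil) σ := by
        have hθeq : RS.proj J atil = σ + (RS.proj J atil - σ) := by abel
        rw [hθeq, Bf_add_left]
        have h1 : 0 < RS.Bf J σ σ := Bf_self_pos J hσne0
        have h2 : 0 ≤ RS.Bf J (RS.proj J atil - σ) σ := by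
          rw [hc, Bf_sum_left]
          apply Finset.sum_nonneg
          intro y hy
          rw [Bf_smul_left]
          apply mul_nonneg (Nat.cast_nonneg _)
          rw [Bf_comm]
          exact hex y hy
        linarith
      have hsub := RF1' J hθmem hσ hBpos (Ne.symm hneθ)
      refine ⟨RS.proj J atil - σ, ⟨hsub, c, by rw [nat_qsum]; exact hc⟩, ?_, ?_⟩
      · have h4 : σ + (RS.proj J atil - σ) = RS.proj J atil := by abel
        rw [h4]
        exact hθmem
      · exact prop_pos_pos J hJ hposrep (fun y _ => Nat.cast_nonneg _) hc
          (fun y _ => Nat.cast_nonneg _) hσne0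
  · -- σ is a negative relative root
    have hnex : ∃ y₀ ∈ J, n y₀ ≠ 0 := by
      by_contra hall
      push_neg at hall
      apply hσne0
      have : -σ = 0 := by
        rw [hnegrep]
        apply Finset.sum_eq_zero
        intro y hy
        rw [hall y hy]
        simp
      simpa using this
    by_cases hline : ∃ t : ℝ, σ = t • RS.proj J atil
    · -- σ is proportional to the highest relative root
      obtain ⟨t, ht⟩ := hline
      have htne : t ≠ 0 := fun h => hσne0 (by rw [ht, h, zero_smul])
      have hθθ : 0 < RS.Bf J (RS.proj J atil) (RS.proj J atil) := Bf_self_pos J hθne0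
      have hexp : RS.Bf J (RS.proj J atil) (RS.proj J atil)
          = ∑ y ∈ J, (dJ y : ℝ) * RS.Bf J (RS.proj J y) (RS.proj J atil) := by
        nth_rewrite 1 [ht1]
        rw [Bf_sum_left]
        exact Finset.sum_congr rfl fun y _ => Bf_smul_left J _ _ _
      have hys : ∃ y ∈ J, 0 < RS.Bf J (RS.proj J y) (RS.proj J atil) := by
        by_contra hall
        push_neg at hall
        have : RS.Bf J (RS.proj J atil) (RS.proj J atil) ≤ 0 := by
          rw [hexp]
          apply Finset.sum_nonpos
          intro y hy
          exact mul_nonpos_of_nonneg_of_nonpos (Nat.cast_nonneg _) (hall y hy)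
        linarith
      obtain ⟨ys, hysJ, hBys⟩ := hys
      have htneg : t < 0 := by
        obtain ⟨y₀, hy₀, hn₀⟩ := hnex
        have hsum0 : ∑ b ∈ J, (t * (dJ b : ℝ) + (n b : ℝ)) • RS.proj J b = 0 := by
          rw [qsum_add, qsum_smul, ← ht1, ← hnegrep, ← ht]
          simp
        have h3 := rcu J hJ _ hsum0 y₀ hy₀
        have hd0 : (0:ℝ) < dJ y₀ := by exact_mod_cast Nat.pos_of_ne_zero (ht2 y₀ hy₀)
        have hn0 : (0:ℝ) < n y₀ := by exact_mod_cast Nat.pos_of_ne_zero hn₀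
        nlinarith
      refine ⟨RS.proj J ys, simple_posRel J hJ hysJ, ?_, ?_⟩
      · refine RF1 J hσ (simple_mem_rel J hJ hysJ) ?_ ?_
        · rw [ht, Bf_smul_left]
          exact mul_neg_of_neg_of_pos htneg (by rw [Bf_comm]; exact hBys)
        · intro h0
          have h1 : (1:ℝ) • σ + RS.proj J ys = 0 := by rw [one_smul]; exact h0
          have h2 := eq_inv_smul' J (one_ne_zero) h1
          rw [ht] at h2
          -- t • θ = (-(1⁻¹)) • π ys
          have h3 : RS.proj J atil = (t⁻¹ * -(1⁻¹:ℝ)) • RS.proj J ys := by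
            rw [← smul_smul, ← h2, smul_smul, inv_mul_cancel₀ htne, one_smul]
          exact hθnl ys hysJ _ h3
      · intro m k hm hk h0
        have h2 := eq_inv_smul' J (ne_of_gt hm) h0
        rw [smul_smul, ht] at h2
        have h3 : RS.proj J atil = (t⁻¹ * (-m⁻¹ * k)) • RS.proj J ys := by
          rw [← smul_smul, ← h2, smul_smul, inv_mul_cancel₀ htne, one_smul]
        exact hθnl ys hysJ _ h3
    · -- σ is not on the line of the highest relative root
      push_neg at hline
      by_cases hb2 : ∃ τ, RS.IsPosRel J τ ∧ (∀ r : ℝ, τ ≠ r • σ) ∧ RS.Bf J σ τ < 0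
      · obtain ⟨τ, hτpos, hτnl, hτB⟩ := hb2
        refine ⟨τ, hτpos, ?_, ?_⟩
        · refine RF1 J hσ hτpos.1 hτB ?_
          intro h0
          exact hτnl (-1) (by rw [neg_smul, one_smul]; linear_combination (norm := abel) h0)
        · intro m k hm hk h0
          have h1 : k • τ + m • σ = 0 := by rw [add_comm]; exact h0
          have h2 := eq_inv_smul' J (ne_of_gt hk) h1
          rw [smul_smul] at h2
          exact hτnl _ h2
      · by_cases hb3 : ∃ τ, RS.IsPosRel J τ ∧ (∀ r : ℝ, τ ≠ r • σ) ∧ 0 < RS.Bf J σ τ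
        · obtain ⟨τ, hτpos, hτnl, hτB⟩ := hb3
          have hτne0 : τ ≠ 0 := by simpa using hτpos.1.2
          have hστ : σ ≠ τ := fun h => hτnl 1 (by rw [one_smul]; exact h.symm)
          have hsub := RF1' J hσ hτpos.1 hτB hστ
          have hfmem : τ - σ ∈ RS.relRoots J := by
            have := relRoots_neg J hsub
            rwa [neg_sub] at this
          obtain ⟨e, herep⟩ := posRel_rep J hτpos
          refine ⟨τ - σ, ⟨hfmem, fun b => e b + n b, ?_⟩, ?_, ?_⟩
          · rw [nat_qsum]
            have : ∀ b ∈ J, ((e b + n b : ℕ) : ℝ) • RS.proj J b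
                = ((e b : ℝ) + (n b : ℝ)) • RS.proj J b := by
              intro b _
              norm_num
            rw [Finset.sum_congr rfl this, qsum_add, ← herep, ← hnegrep]
            abel
          · have h4 : σ + (τ - σ) = τ := by abel
            rw [h4]
            exact hτpos.1
          · intro m k hm hk h0
            by_cases hmk : m = k
            · subst hmk
              have : m • τ = 0 := by
                have : m • σ + m • (τ - σ) = m • τ := by
                  rw [smul_sub]
                  abel
                rw [← this, h0]
              rcases smul_eq_zero.mp this with h | h
              · exact (ne_of_gt hm) h
              · exact hτne0 h
            · have h1 : k • τ + (m - k) • σ = 0 := by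
                have : k • τ + (m - k) • σ = m • σ + k • (τ - σ) := by
                  rw [sub_smul, smul_sub]
                  abel
                rw [this, h0]
              have h2 := eq_inv_smul' J (ne_of_gt hk) h1
              rw [smul_smul] at h2
              exact hτnl _ h2
        · -- contradiction : σ would be orthogonal to everything
          exfalso
          push_neg at hb2 hb3
          have hzero : ∀ τ, RS.IsPosRel J τ → (∀ r : ℝ, τ ≠ r • σ) → RS.Bf J σ τ = 0 := by
            intro τ h1 h2
            have ha := hb2 τ h1 h2
            have hb := hb3 τ h1 h2
            linarith
          have hθnlσ : ∀ r : ℝ, RS.proj J atil ≠ r • σ := by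
            intro r hr
            have hrne : r ≠ 0 := fun h => hθne0 (by rw [hr, h, zero_smul])
            apply hline r⁻¹
            rw [hr, smul_smul, inv_mul_cancel₀ hrne, one_smul]
          by_cases hy0 : ∃ y₀ ∈ J, ∃ r : ℝ, RS.proj J y₀ = r • σ
          · obtain ⟨y₀, hy₀, r, hr⟩ := hy0
            have hrne : r ≠ 0 := fun h => proj_simple_ne J hJ hy₀ (by rw [hr, h, zero_smul])
            have hσr : σ = r⁻¹ • RS.proj J y₀ := by
              rw [hr, smul_smul, inv_mul_cancel₀ hrne, one_smul]
            have hsupp : ∀ y ∈ J, y ≠ y₀ → n y = 0 := by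
              intro y hy hne'
              have hsum0 : ∑ b ∈ J, ((n b : ℝ) + (if b = y₀ then r⁻¹ else 0)) • RS.proj J b = 0 := by
                rw [qsum_add, ← hnegrep, delta_qsum J r⁻¹ hy₀, ← hσr]
                simp
              have h3 := rcu J hJ _ hsum0 y hy
              rw [if_neg hne'] at h3
              simp only [add_zero] at h3
              exact_mod_cast h3
            have hny₀ : n y₀ ≠ 0 := by
              obtain ⟨y', hy', hn'⟩ := hnex
              by_cases h : y' = y₀
              · rwa [h] at hn'
              · exact absurd (hsupp y' hy' h) hn'
            have hσnode : -σ = (n y₀ : ℝ) • RS.proj J y₀ := by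
              rw [hnegrep]
              apply Finset.sum_eq_single_of_mem y₀ hy₀
              intro b hb hbne
              rw [hsupp b hb hbne]
              simp
            have hBθ0 : RS.Bf J σ (RS.proj J atil) = 0 := hzero _ hθposRel hθnlσ
            have hBy : ∀ y ∈ J, y ≠ y₀ → RS.Bf J σ (RS.proj J y) = 0 := by
              intro y hy hne'
              apply hzero _ (simple_posRel J hJ hy)
              intro r' hr'
              have hr'ne : r' ≠ 0 := fun h => proj_simple_ne J hJ hy (by rw [hr', h, zero_smul])
              -- σ = r'⁻¹ • π y and -σ = n y₀ • π y₀ give dependence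
              have hσr' : σ = r'⁻¹ • RS.proj J y := by
                rw [hr', smul_smul, inv_mul_cancel₀ hr'ne, one_smul]
              have hsum0 : ∑ b ∈ J, ((if b = y then r'⁻¹ else 0)
                  + (if b = y₀ then (n y₀ : ℝ) else 0)) • RS.proj J b = 0 := by
                rw [qsum_add, delta_qsum J r'⁻¹ hy, delta_qsum J ((n y₀ : ℝ)) hy₀,
                  ← hσr', ← hσnode]
                simp
              have h3 := rcu J hJ _ hsum0 y hy
              rw [if_pos rfl, if_neg hne'] at h3
              simp only [add_zero] at h3
              exact inv_ne_zero hr'ne h3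
            -- transfer to π y₀
            have hBt : ∀ ξ, RS.Bf J σ ξ = 0 → RS.Bf J (RS.proj J y₀) ξ = 0 := by
              intro ξ hB0
              have : RS.Bf J σ ξ = r⁻¹ * RS.Bf J (RS.proj J y₀) ξ := by
                rw [hσr, Bf_smul_left]
              rw [this] at hB0
              rcases mul_eq_zero.mp hB0 with h | h
              · exact absurd h (inv_ne_zero hrne)
              · exact h
            have hexp : RS.Bf J (RS.proj J atil) (RS.proj J y₀)
                = ∑ y ∈ J, (dJ y : ℝ) * RS.Bf J (RS.proj J y) (RS.proj J y₀) := by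
              nth_rewrite 1 [ht1]
              rw [Bf_sum_left]
              exact Finset.sum_congr rfl fun y _ => Bf_smul_left J _ _ _
            have hval : RS.Bf J (RS.proj J atil) (RS.proj J y₀)
                = (dJ y₀ : ℝ) * RS.Bf J (RS.proj J y₀) (RS.proj J y₀) := by
              rw [hexp]
              apply Finset.sum_eq_single_of_mem y₀ hy₀
              intro b hb hbne
              have : RS.Bf J (RS.proj J b) (RS.proj J y₀) = 0 := by
                rw [Bf_comm]
                exact hBt _ (hBy b hb hbne)
              rw [this, mul_zero]
            have hpos : 0 < RS.Bf J (RS.proj J atil) (RS.proj J y₀) := by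
              rw [hval]
              apply mul_pos
              · exact_mod_cast Nat.pos_of_ne_zero (ht2 y₀ hy₀)
              · exact Bf_self_pos J (proj_simple_ne J hJ hy₀)
            have hzero' : RS.Bf J (RS.proj J atil) (RS.proj J y₀) = 0 := by
              rw [Bf_comm]
              exact hBt _ (by rw [Bf_comm] at hBθ0 ⊢; exact hBθ0)
            linarith
          · push_neg at hy0
            have hBall : ∀ y ∈ J, RS.Bf J σ (RS.proj J y) = 0 := fun y hy =>
              hzero _ (simple_posRel J hJ hy) (hy0 y hy)
            have hσσ : RS.Bf J σ σ = 0 := by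
              have h1 : RS.Bf J σ (-σ) = -RS.Bf J σ σ := Bf_neg_right J _ _
              have h2 : RS.Bf J σ (-σ) = 0 := by
                rw [Bf_comm, hnegrep, Bf_sum_left]
                apply Finset.sum_eq_zero
                intro y hy
                rw [Bf_smul_left, Bf_comm, hBall y hy, mul_zero]
              rw [h2] at h1
              linarith
            exact absurd hσσ (ne_of_gt (Bf_self_pos J hσne0))

/-- Chain construction by induction on the height difference. -/
lemma chain (hirr : RS.Irred) (hJ : J ⊆ RS.base) (hrank : 2 ≤ J.card)
    {atil : V} (hatil : RS.IsHighest atil) :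
    ∀ N : ℕ, ∀ σ : RS.Qspace J, σ ∈ RS.relRoots J →
      (∃ c : V → ℕ, RS.proj J atil - σ = ∑ y ∈ J, (c y : ℝ) • RS.proj J y ∧
        (∑ y ∈ J, c y) ≤ N) →
      ∃ (n : ℕ) (f : ℕ → RS.Qspace J),
        (∀ t < n, RS.IsPosRel J (f t)) ∧
        (∀ i, 1 ≤ i → i ≤ n → σ + ∑ t ∈ Finset.range i, f t ∈ RS.relRoots J) ∧
        σ + ∑ t ∈ Finset.range n, f t = RS.proj J atil ∧
        (∀ i < n, ∀ m k : ℕ, 0 < m → 0 < k →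
          (m : ℤ) • (σ + ∑ t ∈ Finset.range i, f t) ≠ -((k : ℤ) • f i)) := by
  intro N
  induction N with
  | zero =>
    intro σ hσ ⟨c, hcrep, hcsum⟩
    have hallc : ∀ y ∈ J, c y = 0 := fun y hy =>
      Finset.sum_eq_zero_iff.mp (Nat.le_zero.mp hcsum) y hy
    have heq : σ = RS.proj J atil := by
      have : RS.proj J atil - σ = 0 := by
        rw [hcrep]
        apply Finset.sum_eq_zero
        intro y hy
        rw [hallc y hy]
        simp
      linear_combination (norm := abel) -this
    refine ⟨0, fun _ => 0, ?_, ?_, ?_, ?_⟩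
    · intro t ht; omega
    · intro i h1 h2; omega
    · simpa using heq
    · intro i hi; omega
  | succ N ih =>
    intro σ hσ ⟨c, hcrep, hcsum⟩
    by_cases hne : σ = RS.proj J atil
    · refine ⟨0, fun _ => 0, ?_, ?_, ?_, ?_⟩
      · intro t ht; omega
      · intro i h1 h2; omega
      · simpa using hne
      · intro i hi; omega
    · obtain ⟨f₀, hf₀pos, hσ'mem, hf₀prop⟩ := main_step J hirr hJ hrank hatil hσ hne
      obtain ⟨e, herep⟩ := posRel_rep J hf₀pos
      have hf₀ne0 : f₀ ≠ 0 := by simpa using hf₀pos.1.2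
      have hee : ∃ ys ∈ J, e ys ≠ 0 := by
        by_contra hall
        push_neg at hall
        apply hf₀ne0
        rw [herep]
        apply Finset.sum_eq_zero
        intro y hy
        rw [hall y hy]
        simp
      obtain ⟨ys, hysJ, hys⟩ := hee
      obtain ⟨c', hc'⟩ := highest_rel J hJ hatil hσ'mem
      have hkey : ∀ y ∈ J, c y = c' y + e y := by
        intro y hy
        have hsum0 : ∑ b ∈ J, ((c b : ℝ) + -((c' b : ℝ) + (e b : ℝ))) • RS.proj J b = 0 := by
          rw [qsum_add]
          have hA : ∑ b ∈ J, (c b : ℝ) • RS.proj J b = RS.proj J atil - σ := hcrep.symm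
          have hneg : ∑ b ∈ J, (-((c' b : ℝ) + (e b : ℝ))) • RS.proj J b
              = -((RS.proj J atil - (σ + f₀)) + f₀) := by
            calc ∑ b ∈ J, (-((c' b : ℝ) + (e b : ℝ))) • RS.proj J b
                = ∑ b ∈ J, -(((c' b : ℝ) + (e b : ℝ)) • RS.proj J b) :=
                  Finset.sum_congr rfl fun b _ => neg_smul _ _
              _ = -∑ b ∈ J, ((c' b : ℝ) + (e b : ℝ)) • RS.proj J b := Finset.sum_neg_distrib _
              _ = -((RS.proj J atil - (σ + f₀)) + f₀) := by rw [qsum_add, ← hc', ← herep]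
          rw [hA, hneg]
          abel
        have h3 := rcu J hJ _ hsum0 y hy
        have : (c y : ℝ) = (c' y : ℝ) + (e y : ℝ) := by linarith
        exact_mod_cast this
      have hsum' : ∑ y ∈ J, c' y ≤ N := by
        have h1 : ∑ y ∈ J, c y = (∑ y ∈ J, c' y) + ∑ y ∈ J, e y := by
          rw [Finset.sum_congr rfl hkey, Finset.sum_add_distrib]
        have h2 : 1 ≤ ∑ y ∈ J, e y := by
          have := Finset.single_le_sum (f := e) (fun i _ => Nat.zero_le _) hysJ
          omega
        omega
      obtain ⟨n', f', hp1, hp2, hp3, hp4⟩ := ih (σ + f₀) hσ'mem ⟨c', hc', hsum'⟩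
      set F : ℕ → RS.Qspace J := fun t => if t = 0 then f₀ else f' (t - 1) with hFdef
      have hss : ∀ i : ℕ, σ + ∑ t ∈ Finset.range (i+1), F t
          = (σ + f₀) + ∑ t ∈ Finset.range i, f' t := by
        intro i
        rw [Finset.sum_range_succ']
        have hFs : ∀ t : ℕ, F (t + 1) = f' t := by
          intro t
          rw [hFdef]
          simp
        have hF0 : F 0 = f₀ := by rw [hFdef]; simp
        rw [Finset.sum_congr rfl (fun t _ => hFs t), hF0]
        abel
      refine ⟨n' + 1, F, ?_, ?_, ?_, ?_⟩
      · intro t ht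
        by_cases h : t = 0
        · have hF0 : F 0 = f₀ := by rw [hFdef]; simp
          rw [h, hF0]
          exact hf₀pos
        · have : F t = f' (t - 1) := by rw [hFdef]; simp [h]
          rw [this]
          exact hp1 (t - 1) (by omega)
      · intro i h1 h2
        cases i with
        | zero => omega
        | succ j =>
          rw [hss j]
          cases j with
          | zero => simpa using hσ'mem
          | succ j' => exact hp2 (j' + 1) (by omega) (by omega)
      · rw [hss n']
        exact hp3
      · intro i hi m k hm hk heq
        cases i with
        | zero =>
          simp only [Finset.range_zero, Finset.sum_empty, add_zero] at heq
          have hF0 : F 0 = f₀ := by rw [hFdef]; simp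
          rw [hF0] at heq
          apply hf₀prop m k (by exact_mod_cast hm) (by exact_mod_cast hk)
          have hmr : ((m : ℕ) : ℝ) • σ = ((m : ℤ) : ℝ) • σ := by norm_num
          have hkr : ((k : ℕ) : ℝ) • f₀ = ((k : ℤ) : ℝ) • f₀ := by norm_num
          rw [hmr, hkr, Int.cast_smul_eq_zsmul, Int.cast_smul_eq_zsmul, heq]
          abel
        | succ j =>
          have hFj : F (j + 1) = f' j := by rw [hFdef]; simp
          rw [hss j, hFj] at heq
          exact hp4 j (by omega) m k hm hk heq

end Rel

end RootSystemData

open RootSystemData in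
theorem stmt7 {V : Type} [NormedAddCommGroup V] [InnerProductSpace ℝ V]
    (RS : RootSystemData V) (hirr : RS.Irred)
    (J : Finset V) (hJ : J ⊆ RS.base) (hrank : 2 ≤ J.card)
    (atil : V) (hatil : RS.IsHighest atil)
    (α : RS.Qspace J) (hα : α ∈ RS.relRoots J) :
    ∃ (n : ℕ) (f : ℕ → RS.Qspace J),
      (∀ t < n, RS.IsPosRel J (f t)) ∧
      (∀ i, 1 ≤ i → i ≤ n → α + ∑ t ∈ Finset.range i, f t ∈ RS.relRoots J) ∧
      α + ∑ t ∈ Finset.range n, f t = RS.proj J atil ∧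
      (∀ i < n, ¬ ∃ m k : ℕ, 0 < m ∧ 0 < k ∧
        (m : ℤ) • (α + ∑ t ∈ Finset.range i, f t) = -((k : ℤ) • f i)) := by
  obtain ⟨c, hc⟩ := highest_rel J hJ hatil hα
  obtain ⟨n, f, h1, h2, h3, h4⟩ :=
    chain J hirr hJ hrank hatil (∑ y ∈ J, c y) α hα ⟨c, hc, le_refl _⟩
  refine ⟨n, f, h1, h2, h3, ?_⟩
  rintro i hi ⟨m, k, hm, hk, heq⟩
  exact h4 i hi m k hm hk heq
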